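/- The spore-model speed function λ̃(μ) = -(√(μ⁴/4 - μ² + 5) + μ²/2 - 1)/(2μ), defined for μ < 0, satisfies λ̃(-√2) = 1/√2, and 1/√2 ≤ λ̃(μ) for all μ < 0; i.e. the minimum of λ̃ over the negative half-axis is 1/√2, attained at μ = -√2. -/

import Mathlib

theorem spore_speed_function_min :
    (-(Real.sqrt ((-Real.sqrt 2) ^ 4 / 4 - (-Real.sqrt 2) ^ 2 + 5) +
        (-Real.sqrt 2) ^ 2 / 2 - 1) / (2 * (-Real.sqrt 2)) = 1 / Real.sqrt 2) ∧
    (∀ μ : ℝ, μ < 0 →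
      1 / Real.sqrt 2 ≤ -(Real.sqrt (μ ^ 4 / 4 - μ ^ 2 + 5) + μ ^ 2 / 2 - 1) / (2 * μ)) := by
  have h2 : Real.sqrt 2 ^ 2 = 2 := Real.sq_sqrt (by norm_num)
  have h2pos : (0:ℝ) < Real.sqrt 2 := Real.sqrt_pos.mpr (by norm_num)
  constructor
  · have harg : (-Real.sqrt 2) ^ 4 / 4 - (-Real.sqrt 2) ^ 2 + 5 = 4 := by
      have : (-Real.sqrt 2) ^ 4 = ((-Real.sqrt 2) ^ 2) ^ 2 := by ring
      rw [this]
      nlinarith [h2]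
    rw [harg]
    have h4 : Real.sqrt 4 = 2 := by
      rw [show (4:ℝ) = 2^2 by norm_num, Real.sqrt_sq] <;> norm_num
    rw [h4]
    have hne : Real.sqrt 2 ≠ 0 := ne_of_gt h2pos
    field_simp
    rw [h2]; norm_num
  · intro μ hμ
    set E := μ ^ 4 / 4 - μ ^ 2 + 5 with hE
    have hEpos : 0 < E := by rw [hE]; nlinarith [sq_nonneg (μ ^ 2 - 2)]
    set S := Real.sqrt E with hSdef
    have hS0 : 0 ≤ S := Real.sqrt_nonneg _
    have hS2 : S ^ 2 = E := Real.sq_sqrt hEpos.le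
    have ht : 1 - μ ^ 2 / 2 - Real.sqrt 2 * μ ≤ S := by
      rcases le_or_gt (1 - μ ^ 2 / 2 - Real.sqrt 2 * μ) 0 with h | h
      · linarith
      · have hS2' : S ^ 2 = μ ^ 4 / 4 - μ ^ 2 + 5 := by rw [hS2, hE]
        nlinarith [hS2', hS0, h2,
          mul_nonneg (mul_nonneg h2pos.le (by linarith : (0:ℝ) ≤ Real.sqrt 2 - μ))
            (sq_nonneg (μ + Real.sqrt 2))]
    rw [le_div_iff_of_neg (by linarith : 2 * μ < 0)]
    have : 1 / Real.sqrt 2 * (2 * μ) = Real.sqrt 2 * μ := by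
      field_simp
      nlinarith [h2]
    rw [this]
    linarith
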